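/- (Tsirelson-type trigonometric bound) For any angles θ₁, θ₂, θ₃, θ₄ arising as angles between four unit vectors x, x', y, y' in ℝ³ (θ₁ = angle(x,y), θ₂ = angle(x,y'), θ₃ = angle(x',y), θ₄ = angle(x',y')), we have |−cos θ₁ − cos θ₂ − cos θ₃ + cos θ₄| = |x·y + x·y' + x'·y − x'·y'| ≤ 2√2. -/

import Mathlib

lemma sum_le_sqrt2 (a b : ℝ) (ha : 0 ≤ a) (hb : 0 ≤ b) (h : a^2 + b^2 = 4) :
    a + b ≤ 2 * Real.sqrt 2 := by
  nlinarith [sq_nonneg (a - b), Real.sq_sqrt (by norm_num : (0:ℝ) ≤ 2), Real.sqrt_nonneg 2, sq_nonneg (a + b - 2*Real.sqrt 2)]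

/-- (Tsirelson-type trigonometric bound) For unit vectors `x, x', y, y'` in
ℝ³, `|x·y + x·y' + x'·y − x'·y'| ≤ 2√2`; the inner products are the cosines
of the angles between the vectors. -/
theorem tsirelson_bound (x x' y y' : EuclideanSpace ℝ (Fin 3))
    (hx : ‖x‖ = 1) (hx' : ‖x'‖ = 1) (hy : ‖y‖ = 1) (hy' : ‖y'‖ = 1) :
    |inner ℝ x y + inner ℝ x y' + inner ℝ x' y - inner (𝕜 := ℝ) x' y'| ≤
      2 * Real.sqrt 2 := by
  have key : (inner ℝ x y + inner ℝ x y' + inner ℝ x' y - inner (𝕜 := ℝ) x' y')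
      = inner (𝕜 := ℝ) x (y + y') + inner (𝕜 := ℝ) x' (y - y') := by
    simp [inner_add_right, inner_sub_right]; ring
  have h1 : |inner (𝕜 := ℝ) x (y + y')| ≤ ‖y + y'‖ := by
    calc |inner (𝕜 := ℝ) x (y + y')| ≤ ‖x‖ * ‖y + y'‖ := abs_real_inner_le_norm _ _
    _ = ‖y + y'‖ := by rw [hx, one_mul]
  have h2 : |inner (𝕜 := ℝ) x' (y - y')| ≤ ‖y - y'‖ := by
    calc |inner (𝕜 := ℝ) x' (y - y')| ≤ ‖x'‖ * ‖y - y'‖ := abs_real_inner_le_norm _ _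
    _ = ‖y - y'‖ := by rw [hx', one_mul]
  have hpar : ‖y + y'‖^2 + ‖y - y'‖^2 = 4 := by
    have := norm_add_sq_real y y'
    have := norm_sub_sq_real y y'
    nlinarith [hy, hy']
  have hsum : ‖y + y'‖ + ‖y - y'‖ ≤ 2 * Real.sqrt 2 :=
    sum_le_sqrt2 _ _ (norm_nonneg _) (norm_nonneg _) hpar
  calc |inner ℝ x y + inner ℝ x y' + inner ℝ x' y - inner (𝕜 := ℝ) x' y'|
      = |inner (𝕜 := ℝ) x (y + y') + inner (𝕜 := ℝ) x' (y - y')| := by rw [key]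
    _ ≤ |inner (𝕜 := ℝ) x (y + y')| + |inner (𝕜 := ℝ) x' (y - y')| := abs_add_le _ _
    _ ≤ ‖y + y'‖ + ‖y - y'‖ := add_le_add h1 h2
    _ ≤ 2 * Real.sqrt 2 := hsum
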